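/- (Correctness of the shifted COCG algorithm.) Let A be an N×N complex symmetric matrix (A = Aᵀ), b ∈ ℂ^N, and σ_s, σ_i ∈ ℂ. Let the COCG iteration applied to the seed system (A + σ_s I) x = b with x_0 = 0 generate residuals r_n, directions p_n, and scalars α_n, β_n, with all α_n nonzero, and let R_n ∈ ℂ[X] be the associated residual polynomials. Set π_n := R_n(σ_s − σ_i) and assume π_n ≠ 0 for all n. Define the shifted sequences by x_0^{(i)} = 0, p_{−1}^{(i)} = 0, and for n ≥ 0: β_{n−1}^{(i)} = (π_{n−1}/π_n)² β_{n−1}, α_n^{(i)} = (π_n/π_{n+1}) α_n, p_n^{(i)} = (1/π_n) r_n + β_{n−1}^{(i)} p_{n−1}^{(i)}, x_{n+1}^{(i)} = x_n^{(i)} + α_n^{(i)} p_n^{(i)}. Then for every n, the residual of the shifted system satisfies b − (A + σ_i I) x_n^{(i)} = (1/π_n) r_n. -/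
import Mathlib


open Matrix Polynomial

/-- Correctness of the shifted COCG algorithm: the vector `(1/π_n) r_n` is the
true residual of the shifted iterate `x_n^{(i)}`. -/
theorem stmt_13 {N : ℕ} (A : Matrix (Fin N) (Fin N) ℂ) (hA : Aᵀ = A)
    (b : Fin N → ℂ) (σs σi : ℂ)
    -- COCG iteration for the seed system `(A + σs I) x = b`, with `x₀ = 0`:
    (r p : ℕ → Fin N → ℂ) (α β : ℕ → ℂ)
    (hr0 : r 0 = b)
    (hp0 : p 0 = r 0)
    (hp : ∀ n, p (n + 1) = r (n + 1) + β n • p n)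
    (hα : ∀ n, α n = (r n ⬝ᵥ r n) /
      (p n ⬝ᵥ (A + σs • (1 : Matrix (Fin N) (Fin N) ℂ)).mulVec (p n)))
    (hr : ∀ n, r (n + 1) = r n
      - α n • (A + σs • (1 : Matrix (Fin N) (Fin N) ℂ)).mulVec (p n))
    (hβ : ∀ n, β n = (r (n + 1) ⬝ᵥ r (n + 1)) / (r n ⬝ᵥ r n))
    (hαne : ∀ n, α n ≠ 0)
    -- the residual polynomials of the seed iteration:
    (R : ℕ → Polynomial ℂ)
    (hR0 : R 0 = 1)
    (hR1 : R 1 = 1 - C (α 0) * X)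
    (hRrec : ∀ n, R (n + 2) =
      (C (1 + (β n / α n) * α (n + 1)) - C (α (n + 1)) * X) * R (n + 1)
        - C ((β n / α n) * α (n + 1)) * R n)
    -- the collinearity factors `π_n := R_n(σs - σi)`, assumed nonzero:
    (π : ℕ → ℂ) (hπ : ∀ n, π n = (R n).eval (σs - σi))
    (hπne : ∀ n, π n ≠ 0)
    -- the shifted sequences:
    (xi pi : ℕ → Fin N → ℂ)
    (hxi0 : xi 0 = 0)
    (hpi0 : pi 0 = (1 / π 0) • r 0)
    (hpi : ∀ n, pi (n + 1) = (1 / π (n + 1)) • r (n + 1)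
      + ((π n / π (n + 1)) ^ 2 * β n) • pi n)
    (hxi : ∀ n, xi (n + 1) = xi n + ((π n / π (n + 1)) * α n) • pi n) :
    ∀ n, b - (A + σi • (1 : Matrix (Fin N) (Fin N) ℂ)).mulVec (xi n)
      = (1 / π n) • r n := by
  set M := A + σs • (1 : Matrix (Fin N) (Fin N) ℂ) with hM
  have hπ0 : π 0 = 1 := by simp [hπ, hR0]
  have hπ1 : π 1 = 1 - α 0 * (σs - σi) := by simp [hπ, hR1]
  have hπrec : ∀ n, α n * π (n + 2) =
      (α n + β n * α (n + 1) - α n * α (n + 1) * (σs - σi)) * π (n + 1)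
        - β n * α (n + 1) * π n := by
    intro n
    have h : π (n + 2) = (1 + (β n / α n) * α (n + 1) - α (n + 1) * (σs - σi)) * π (n + 1)
        - (β n / α n) * α (n + 1) * π n := by
      simp only [hπ, hRrec n, eval_sub, eval_mul, eval_C, eval_X, eval_add, eval_one]
      try ring
    rw [h]
    have e : α n * (β n / α n) = β n := by
      rw [mul_comm]; exact div_mul_cancel₀ _ (hαne n)
    linear_combination (α (n + 1) * (π (n + 1) - π n)) * e
  have hMp : ∀ n, α n • M.mulVec (p n) = r n - r (n + 1) := by
    intro n
    rw [hr n]; module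
  have hshift : ∀ v : Fin N → ℂ,
      (A + σi • (1 : Matrix (Fin N) (Fin N) ℂ)).mulVec v
        = M.mulVec v - (σs - σi) • v := by
    intro v
    simp only [hM, Matrix.add_mulVec, Matrix.smul_mulVec, Matrix.one_mulVec]
    module
  -- key polynomial identity
  have key : ∀ n, (π n ^ 2 * α n) • (M.mulVec (pi n) - (σs - σi) • pi n)
      = π (n + 1) • r n - π n • r (n + 1) := by
    intro n
    induction n with
    | zero =>
        have hpi0' : pi 0 = r 0 := by rw [hpi0, hπ0]; simp
        have h3 := hMp 0
        rw [hp0] at h3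
        rw [hpi0', hπ0, show (0 : ℕ) + 1 = 1 from rfl, hπ1]
        linear_combination (norm := module) h3
    | succ n ih =>
        have h1 : M.mulVec (r (n + 1)) = M.mulVec (p (n + 1)) - β n • M.mulVec (p n) := by
          rw [hp n, Matrix.mulVec_add, Matrix.mulVec_smul]; module
        have hMr : (α n * α (n + 1)) • M.mulVec (r (n + 1))
            = α n • (r (n + 1) - r (n + 2)) - (α (n + 1) * β n) • (r n - r (n + 1)) := by
          linear_combination (norm := module) (α n * α (n + 1)) • h1 + α n • hMp (n + 1) - (α (n + 1) * β n) • hMp n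
        have hpi' : (π (n + 1)) ^ 2 • pi (n + 1)
            = π (n + 1) • r (n + 1) + (π n ^ 2 * β n) • pi n := by
          rw [hpi n]
          have h0 : π n ≠ 0 := hπne n
          have h1' : π (n + 1) ≠ 0 := hπne (n + 1)
          match_scalars <;> field_simp [h0, h1'] <;> try ring
        have hMpi1 : (π (n + 1)) ^ 2 • M.mulVec (pi (n + 1))
            = π (n + 1) • M.mulVec (r (n + 1)) + (π n ^ 2 * β n) • M.mulVec (pi n) := by
          calc (π (n + 1)) ^ 2 • M.mulVec (pi (n + 1))
              = M.mulVec ((π (n + 1)) ^ 2 • pi (n + 1)) := (M.mulVec_smul _ _).symm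
            _ = _ := by rw [hpi', Matrix.mulVec_add, Matrix.mulVec_smul, Matrix.mulVec_smul]
        have hπ2v : (α n * π (n + 2)) • r (n + 1)
            = ((α n + β n * α (n + 1) - α n * α (n + 1) * (σs - σi)) * π (n + 1)
              - β n * α (n + 1) * π n) • r (n + 1) := by rw [hπrec n]
        apply smul_right_injective (Fin N → ℂ) (hαne n)
        show α n • _ = α n • _
        rw [show n + 1 + 1 = n + 2 from rfl]
        linear_combination (norm := module) (α n * α (n + 1)) • hMpi1 + π (n + 1) • hMr + (α (n + 1) * β n) • ih + (-(α n * α (n + 1) * (σs - σi))) • hpi' - hπ2v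
  -- strengthened main statement
  have main : ∀ n, π n • (b - (A + σi • (1 : Matrix (Fin N) (Fin N) ℂ)).mulVec (xi n))
      = r n := by
    intro n
    induction n with
    | zero => rw [hxi0, hπ0, hr0]; simp
    | succ n ih =>
        apply smul_right_injective (Fin N → ℂ) (hπne n)
        show π n • _ = π n • _
        have hc : (π n * (π (n + 1) * ((π n / π (n + 1)) * α n))) = π n ^ 2 * α n := by
          field_simp [hπne n, hπne (n + 1)]
          try ring
        have hcv : (π n * (π (n + 1) * ((π n / π (n + 1)) * α n)))
              • (M.mulVec (pi n) - (σs - σi) • pi n)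
            = (π n ^ 2 * α n) • (M.mulVec (pi n) - (σs - σi) • pi n) := by rw [hc]
        rw [hshift] at ih
        rw [hxi n, Matrix.mulVec_add, Matrix.mulVec_smul, hshift, hshift]
        linear_combination (norm := module) π (n + 1) • ih - key n - hcv
  intro n
  rw [← main n, smul_smul, one_div, inv_mul_cancel₀ (hπne n), one_smul]
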